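/- arXiv:2203.05019 — 2 statements merged into one kernel-verified Lean document; each statement's English description precedes it below -/
import Mathlib

section
/- Let b_1, …, b_n be linearly independent vectors in ℝ^n forming the columns of a matrix B, let T ∈ ℝ^{n×n} be upper-triangular and invertible, and let S = B·T with columns s_1, …, s_n. Then for every i, the Gram–Schmidt vectors satisfy s_i^* = T_{ii} · b_i^*. -/
open scoped RealInnerProductSpace

/-- The Gram–Schmidt orthogonalization of a finite family of vectors in `ℝ^n`. -/
noncomputable def gramSchmidtVecs {n m : ℕ} (b : Fin m → EuclideanSpace ℝ (Fin n)) :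
    Fin m → EuclideanSpace ℝ (Fin n) :=
  @InnerProductSpace.gramSchmidt ℝ (EuclideanSpace ℝ (Fin n)) _ _ _ (Fin m) _ _
    (inferInstance : WellFoundedLT (Fin m)) b

private lemma gsv_span_Iio {n m : ℕ} (f : Fin m → EuclideanSpace ℝ (Fin n)) (i : Fin m) :
    Submodule.span ℝ (gramSchmidtVecs f '' Set.Iio i) = Submodule.span ℝ (f '' Set.Iio i) :=
  @InnerProductSpace.span_gramSchmidt_Iio ℝ _ _ _ _ (Fin m) _ _ (inferInstance : WellFoundedLT (Fin m)) f i

private lemma gsv_def' {n m : ℕ} (f : Fin m → EuclideanSpace ℝ (Fin n)) (i : Fin m) :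
    f i = gramSchmidtVecs f i + ∑ j ∈ Finset.Iio i,
      ((ℝ ∙ gramSchmidtVecs f j).starProjection (f i) : EuclideanSpace ℝ (Fin n)) :=
  @InnerProductSpace.gramSchmidt_def' ℝ _ _ _ _ (Fin m) _ _ (inferInstance : WellFoundedLT (Fin m)) f i

private lemma gsv_orthogonal {n m : ℕ} (f : Fin m → EuclideanSpace ℝ (Fin n))
    {a b : Fin m} (h : a ≠ b) : ⟪gramSchmidtVecs f a, gramSchmidtVecs f b⟫ = 0 :=
  @InnerProductSpace.gramSchmidt_orthogonal ℝ _ _ _ _ (Fin m) _ _ (inferInstance : WellFoundedLT (Fin m)) f a b h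

private lemma aux_mem_orthogonal_span {n : ℕ} {S : Set (EuclideanSpace ℝ (Fin n))}
    {x : EuclideanSpace ℝ (Fin n)} (h : ∀ v ∈ S, ⟪x, v⟫ = 0) :
    x ∈ (Submodule.span ℝ S)ᗮ := by
  rw [Submodule.mem_orthogonal']
  intro u hu
  induction hu using Submodule.span_induction with
  | mem v hv => exact h v hv
  | zero => simp
  | add u v _ _ hu hv => rw [inner_add_right, hu, hv, add_zero]
  | smul a u _ hu => rw [inner_smul_right, hu, mul_zero]

/-- If `S = B * T` with `T` upper-triangular and invertible, and the columns of `B`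
are linearly independent, then the Gram–Schmidt vectors satisfy `sᵢ* = Tᵢᵢ • bᵢ*`. -/
theorem gramSchmidt_of_upper_triangular (n : ℕ)
    (b : Fin n → EuclideanSpace ℝ (Fin n)) (hb : LinearIndependent ℝ b)
    (T : Matrix (Fin n) (Fin n) ℝ)
    (hT : ∀ i j : Fin n, j < i → T i j = 0) (hTinv : IsUnit T.det)
    (s : Fin n → EuclideanSpace ℝ (Fin n))
    (hs : ∀ i : Fin n, s i = ∑ j : Fin n, T j i • b j) :
    ∀ i : Fin n, gramSchmidtVecs s i = T i i • gramSchmidtVecs b i := by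
  have hdet : T.det = ∏ i, T i i := Matrix.det_of_upperTriangular (fun i j hij => hT i j hij)
  have hdiag : ∀ i : Fin n, T i i ≠ 0 := by
    rw [hdet, isUnit_iff_ne_zero, Finset.prod_ne_zero_iff] at hTinv
    exact fun i => hTinv i (Finset.mem_univ i)
  refine fun i => wellFounded_lt.induction
    (C := fun i => gramSchmidtVecs s i = T i i • gramSchmidtVecs b i) i fun i IH => ?_
  set W : Submodule ℝ (EuclideanSpace ℝ (Fin n)) := Submodule.span ℝ (b '' Set.Iio i) with hW
  -- spans of earlier gramSchmidt vectors agree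
  have hspan_b : Submodule.span ℝ (gramSchmidtVecs b '' Set.Iio i) = W := gsv_span_Iio b i
  have hspan_s : Submodule.span ℝ (gramSchmidtVecs s '' Set.Iio i) = W := by
    rw [← hspan_b]
    apply Submodule.span_eq_span
    · rintro _ ⟨j, hj, rfl⟩
      rw [IH j hj]
      exact Submodule.smul_mem _ _ (Submodule.subset_span ⟨j, hj, rfl⟩)
    · rintro _ ⟨j, hj, rfl⟩
      have : gramSchmidtVecs b j = (T j j)⁻¹ • gramSchmidtVecs s j := by
        rw [IH j hj, smul_smul, inv_mul_cancel₀ (hdiag j), one_smul]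
      rw [this]
      exact Submodule.smul_mem _ _ (Submodule.subset_span ⟨j, hj, rfl⟩)
  -- the difference lies in W
  have hmem_s : s i - gramSchmidtVecs s i ∈ W := by
    rw [← hspan_s]
    nth_rewrite 1 [gsv_def' s i]
    rw [add_sub_cancel_left]
    refine Submodule.sum_mem _ fun j hj => ?_
    have hj' : (j : Fin n) < i := Finset.mem_Iio.mp hj
    have h1 : ((ℝ ∙ gramSchmidtVecs s j).starProjection (s i) : EuclideanSpace ℝ (Fin n))
        ∈ (ℝ ∙ gramSchmidtVecs s j) := Submodule.starProjection_apply_mem _ _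
    refine Submodule.span_mono ?_ h1
    rw [Set.singleton_subset_iff]
    exact ⟨j, hj', rfl⟩
  have hmem_b : b i - gramSchmidtVecs b i ∈ W := by
    rw [← hspan_b]
    nth_rewrite 1 [gsv_def' b i]
    rw [add_sub_cancel_left]
    refine Submodule.sum_mem _ fun j hj => ?_
    have hj' : (j : Fin n) < i := Finset.mem_Iio.mp hj
    have h1 : ((ℝ ∙ gramSchmidtVecs b j).starProjection (b i) : EuclideanSpace ℝ (Fin n))
        ∈ (ℝ ∙ gramSchmidtVecs b j) := Submodule.starProjection_apply_mem _ _
    refine Submodule.span_mono ?_ h1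
    rw [Set.singleton_subset_iff]
    exact ⟨j, hj', rfl⟩
  have hmem_si : s i - T i i • b i ∈ W := by
    rw [hs i]
    have : (∑ j : Fin n, T j i • b j) - T i i • b i = ∑ j ∈ Finset.univ.erase i, T j i • b j := by
      rw [eq_comm, Finset.sum_erase_eq_sub (Finset.mem_univ i)]
    rw [this]
    refine Submodule.sum_mem _ fun j hj => ?_
    rcases lt_or_gt_of_ne (Finset.ne_of_mem_erase hj) with h | h
    · exact Submodule.smul_mem _ _ (Submodule.subset_span ⟨j, h, rfl⟩)
    · rw [hT j i h, zero_smul]; exact Submodule.zero_mem _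
  have hdiffW : gramSchmidtVecs s i - T i i • gramSchmidtVecs b i ∈ W := by
    have heq : gramSchmidtVecs s i - T i i • gramSchmidtVecs b i =
        -(s i - gramSchmidtVecs s i) + (s i - T i i • b i)
          + T i i • (b i - gramSchmidtVecs b i) := by
      rw [smul_sub]; abel
    rw [heq]
    exact Submodule.add_mem _ (Submodule.add_mem _ (Submodule.neg_mem _ hmem_s) hmem_si)
      (Submodule.smul_mem _ _ hmem_b)
  -- the difference is orthogonal to W
  have horth_s : gramSchmidtVecs s i ∈ Wᗮ := by
    rw [← hspan_s]
    refine aux_mem_orthogonal_span ?_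
    rintro _ ⟨j, hj, rfl⟩
    exact gsv_orthogonal s (ne_of_gt hj)
  have horth_b : T i i • gramSchmidtVecs b i ∈ Wᗮ := by
    refine Submodule.smul_mem _ _ ?_
    rw [← hspan_b]
    refine aux_mem_orthogonal_span ?_
    rintro _ ⟨j, hj, rfl⟩
    exact gsv_orthogonal b (ne_of_gt hj)
  have hdiffO : gramSchmidtVecs s i - T i i • gramSchmidtVecs b i ∈ Wᗮ :=
    Submodule.sub_mem _ horth_s horth_b
  have hzero : gramSchmidtVecs s i - T i i • gramSchmidtVecs b i = 0 := by
    have := Submodule.inner_right_of_mem_orthogonal hdiffW hdiffO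
    rwa [inner_self_eq_zero] at this
  exact sub_eq_zero.mp hzero
end

section
/- Let b_1, …, b_n be a (3/4)-LLL-reduced basis of a lattice L ⊆ ℝ^n. Then ‖b_1‖ ≤ 2^{(n−1)/2} · λ₁(L), where λ₁(L) is the minimum Euclidean norm over nonzero vectors of L. -/
/-- `λ₁(L)`: the minimum norm of a nonzero vector of `L`. -/
noncomputable def lambda1 {n : ℕ} (L : Set (EuclideanSpace ℝ (Fin n))) : ℝ :=
  sInf {r : ℝ | ∃ v ∈ L, v ≠ 0 ∧ ‖v‖ = r}

open InnerProductSpace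

instance finWFLT (m : ℕ) : WellFoundedLT (Fin m) := inferInstance

lemma gramSchmidtVecs_eq {n m : ℕ} (b : Fin m → EuclideanSpace ℝ (Fin n)) :
    gramSchmidtVecs b = gramSchmidt ℝ b := rfl

/-- inner of `b i` with its own Gram-Schmidt vector is the squared norm. -/
lemma inner_self_gs {n : ℕ} (b : Fin n → EuclideanSpace ℝ (Fin n)) (i : Fin n) :
    (inner ℝ (b i) (gramSchmidt ℝ b i) : ℝ) = ‖gramSchmidt ℝ b i‖ ^ 2 := by
  conv_lhs => rw [gramSchmidt_def'' ℝ b i]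
  rw [inner_add_left, real_inner_self_eq_norm_sq, sum_inner, Finset.sum_eq_zero, add_zero]
  intro j hj
  rw [real_inner_smul_left, gramSchmidt_orthogonal ℝ b (Finset.mem_Iio.mp hj).ne, mul_zero]

/-- `gs` at the bottom index equals `b` there. -/
lemma gs_zero {n : ℕ} (hn : 0 < n) (b : Fin n → EuclideanSpace ℝ (Fin n)) :
    gramSchmidt ℝ b ⟨0, hn⟩ = b ⟨0, hn⟩ := by
  rw [gramSchmidt_def, Finset.sum_eq_zero, sub_zero]
  intro j hj
  exact absurd (Finset.mem_Iio.mp hj) (by simp [Fin.lt_def])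

/-- If `b₁, …, bₙ` is a `(3/4)`-LLL-reduced basis of a lattice `L`, then
`‖b₁‖ ≤ 2^{(n-1)/2}·λ₁(L)`. -/
theorem lll_first_vector_bound (n : ℕ) (hn : 0 < n)
    (b : Fin n → EuclideanSpace ℝ (Fin n)) (hb : LinearIndependent ℝ b)
    (L : Set (EuclideanSpace ℝ (Fin n)))
    (hL : L = (Submodule.span ℤ (Set.range b) : Submodule ℤ (EuclideanSpace ℝ (Fin n))))
    (hsize : ∀ i j : Fin n, j < i →
      |(inner ℝ (b i) (gramSchmidtVecs b j) : ℝ) /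
        (inner ℝ (gramSchmidtVecs b j) (gramSchmidtVecs b j) : ℝ)| ≤ 1 / 2)
    (hlovasz : ∀ i : Fin n, ∀ hi : (i : ℕ) + 1 < n,
      ‖gramSchmidtVecs b ⟨(i : ℕ) + 1, hi⟩ +
        ((inner ℝ (b ⟨(i : ℕ) + 1, hi⟩) (gramSchmidtVecs b i) : ℝ) /
          (inner ℝ (gramSchmidtVecs b i) (gramSchmidtVecs b i) : ℝ)) • gramSchmidtVecs b i‖ ^ 2
        ≥ (3 / 4 : ℝ) * ‖gramSchmidtVecs b i‖ ^ 2) :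
    ‖b ⟨0, hn⟩‖ ≤ 2 ^ (((n : ℝ) - 1) / 2) * lambda1 L := by
  rw [gramSchmidtVecs_eq] at hsize hlovasz
  set gs : Fin n → EuclideanSpace ℝ (Fin n) := gramSchmidt ℝ b with hgs
  -- Step 1: norms of successive GS vectors shrink by at most √2
  have step : ∀ m : ℕ, ∀ h1 : m + 1 < n,
      ‖gs ⟨m + 1, h1⟩‖ ^ 2 ≥ (1 / 2 : ℝ) * ‖gs ⟨m, Nat.lt_of_succ_lt h1⟩‖ ^ 2 := by
    intro m h1
    set i : Fin n := ⟨m, Nat.lt_of_succ_lt h1⟩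
    set i' : Fin n := ⟨m + 1, h1⟩
    have hlo := hlovasz i h1
    set μ : ℝ := (inner ℝ (b i') (gs i) : ℝ) / (inner ℝ (gs i) (gs i) : ℝ) with hμ
    have hij : i' ≠ i := by simp [i, i', Fin.ext_iff]
    have horth : (inner ℝ (gs i') (gs i) : ℝ) = 0 := gramSchmidt_orthogonal ℝ b hij
    have hexp : ‖gs i' + μ • gs i‖ ^ 2 = ‖gs i'‖ ^ 2 + μ ^ 2 * ‖gs i‖ ^ 2 := by
      rw [norm_add_sq_real, real_inner_smul_right, horth, norm_smul, Real.norm_eq_abs,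
        mul_pow, sq_abs]
      ring
    have hμ2 : μ ^ 2 ≤ 1 / 4 := by
      have habs : |μ| ≤ 1 / 2 := hsize i' i (by simp [i, i', Fin.lt_def])
      calc μ ^ 2 = |μ| ^ 2 := (sq_abs μ).symm
        _ ≤ (1 / 2 : ℝ) ^ 2 := pow_le_pow_left₀ (abs_nonneg μ) habs 2
        _ = 1 / 4 := by norm_num
    rw [hexp] at hlo
    nlinarith [sq_nonneg ‖gs i‖]
  -- Step 2: ‖gs k‖² ≥ (1/2)^k ‖b 0‖²
  have hb0 : gs ⟨0, hn⟩ = b ⟨0, hn⟩ := gs_zero hn b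
  have chain : ∀ m : ℕ, ∀ hm : m < n,
      ‖gs ⟨m, hm⟩‖ ^ 2 ≥ (1 / 2 : ℝ) ^ m * ‖b ⟨0, hn⟩‖ ^ 2 := by
    intro m
    induction m with
    | zero => intro hm; rw [pow_zero, one_mul]; rw [show (⟨0, hm⟩ : Fin n) = ⟨0, hn⟩ by rfl, hb0]
    | succ m ih =>
      intro hm
      have h1 := step m hm
      have h2 := ih (Nat.lt_of_succ_lt hm)
      calc ‖gs ⟨m + 1, hm⟩‖ ^ 2 ≥ (1/2 : ℝ) * ‖gs ⟨m, Nat.lt_of_succ_lt hm⟩‖ ^ 2 := h1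
        _ ≥ (1/2 : ℝ) * ((1 / 2 : ℝ) ^ m * ‖b ⟨0, hn⟩‖ ^ 2) := by nlinarith
        _ = (1 / 2 : ℝ) ^ (m + 1) * ‖b ⟨0, hn⟩‖ ^ 2 := by ring
  have chain' : ∀ k : Fin n, ‖gs k‖ ^ 2 ≥ (1 / 2 : ℝ) ^ (n - 1) * ‖b ⟨0, hn⟩‖ ^ 2 := by
    intro k
    have h1 := chain k k.2
    have h2 : (1 / 2 : ℝ) ^ (n - 1) ≤ (1 / 2 : ℝ) ^ (k : ℕ) :=
      pow_le_pow_of_le_one (by norm_num) (by norm_num) (by omega)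
    have := sq_nonneg ‖b ⟨0, hn⟩‖
    calc ‖gs k‖ ^ 2 ≥ (1/2 : ℝ) ^ (k : ℕ) * ‖b ⟨0, hn⟩‖ ^ 2 := by simpa using h1
      _ ≥ (1/2 : ℝ) ^ (n - 1) * ‖b ⟨0, hn⟩‖ ^ 2 := by nlinarith
  -- Step 3: every nonzero lattice vector has norm ≥ some ‖gs k‖
  have latbound : ∀ v ∈ L, v ≠ 0 → ∃ k : Fin n, ‖gs k‖ ≤ ‖v‖ := by
    intro v hv hv0
    rw [hL, SetLike.mem_coe, Submodule.mem_span_range_iff_exists_fun] at hv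
    obtain ⟨z, hz⟩ := hv
    have hzne : ∃ i, z i ≠ 0 := by
      by_contra h
      push_neg at h
      apply hv0
      rw [← hz, Finset.sum_eq_zero]
      intro i _
      rw [h i, zero_smul]
    set S : Finset (Fin n) := Finset.univ.filter (fun i => z i ≠ 0) with hS
    have hSne : S.Nonempty := by
      obtain ⟨i, hi⟩ := hzne
      exact ⟨i, by simp [hS, hi]⟩
    set k : Fin n := S.max' hSne with hk
    have hkS : z k ≠ 0 := by
      have := S.max'_mem hSne
      simpa [hS] using this
    refine ⟨k, ?_⟩
    have hgsk : gs k ≠ 0 := gramSchmidt_ne_zero k hb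
    have hgskpos : (0:ℝ) < ‖gs k‖ := norm_pos_iff.mpr hgsk
    have hinner : (inner ℝ v (gs k) : ℝ) = (z k : ℝ) * ‖gs k‖ ^ 2 := by
      rw [← hz, sum_inner]
      rw [Finset.sum_eq_single k]
      · rw [show (z k • b k) = (z k : ℝ) • b k from (Int.cast_smul_eq_zsmul ℝ (z k) (b k)).symm,
          real_inner_smul_left, inner_self_gs]
      · intro i _ hik
        by_cases hzi : z i = 0
        · rw [hzi, zero_smul, inner_zero_left]
        · have hiS : i ∈ S := by simp [hS, hzi]
          have hilt : i < k := lt_of_le_of_ne (S.le_max' i hiS) hik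
          rw [show (z i • b i) = (z i : ℝ) • b i from (Int.cast_smul_eq_zsmul ℝ (z i) (b i)).symm,
            real_inner_smul_left, real_inner_comm, gramSchmidt_inv_triangular ℝ b hilt, mul_zero]
      · intro h
        exact absurd (Finset.mem_univ k) h
    have habs : ‖gs k‖ ^ 2 ≤ |(inner ℝ v (gs k) : ℝ)| := by
      rw [hinner, abs_mul, abs_of_nonneg (sq_nonneg ‖gs k‖)]
      have : (1:ℝ) ≤ |(z k : ℝ)| := by
        rw [← Int.cast_abs]
        exact_mod_cast Int.one_le_abs hkS
      nlinarith [sq_nonneg ‖gs k‖]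
    have hcs : |(inner ℝ v (gs k) : ℝ)| ≤ ‖v‖ * ‖gs k‖ := abs_real_inner_le_norm v (gs k)
    have : ‖gs k‖ ^ 2 ≤ ‖v‖ * ‖gs k‖ := le_trans habs hcs
    rw [sq] at this
    exact le_of_mul_le_mul_right this hgskpos
  -- Step 4: the constant c and arithmetic
  set c : ℝ := (2:ℝ) ^ (-(((n:ℝ) - 1) / 2)) with hc
  have hcpos : (0:ℝ) < c := Real.rpow_pos_of_pos (by norm_num) _
  have hcsq : c ^ 2 = (1 / 2 : ℝ) ^ (n - 1) := by
    rw [hc, ← Real.rpow_natCast ((2:ℝ) ^ (-(((n:ℝ) - 1) / 2))) 2, ← Real.rpow_mul (by norm_num)]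
    have h1 : -(((n:ℝ) - 1) / 2) * (2:ℕ) = -(((n - 1 : ℕ) : ℝ)) := by
      push_cast [Nat.cast_sub hn]
      ring
    rw [h1, Real.rpow_neg (by norm_num), Real.rpow_natCast, ← inv_pow]
    norm_num
  have hprod : (2:ℝ) ^ (((n : ℝ) - 1) / 2) * c = 1 := by
    rw [hc, ← Real.rpow_add (by norm_num), add_neg_cancel, Real.rpow_zero]
  -- lower bound on lambda1
  have hlow : c * ‖b ⟨0, hn⟩‖ ≤ lambda1 L := by
    apply le_csInf
    · refine ⟨‖b ⟨0, hn⟩‖, b ⟨0, hn⟩, ?_, hb.ne_zero _, rfl⟩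
      rw [hL]
      exact Submodule.subset_span (Set.mem_range_self _)
    · rintro r ⟨v, hvL, hv0, rfl⟩
      obtain ⟨k, hk⟩ := latbound v hvL hv0
      have h2 : (c * ‖b ⟨0, hn⟩‖) ^ 2 ≤ ‖v‖ ^ 2 := by
        have := chain' k
        have hk2 : ‖gs k‖ ^ 2 ≤ ‖v‖ ^ 2 := pow_le_pow_left₀ (norm_nonneg _) hk 2
        rw [mul_pow, hcsq]
        nlinarith
      have h3 : 0 ≤ c * ‖b ⟨0, hn⟩‖ := by positivity
      exact (pow_le_pow_iff_left₀ h3 (norm_nonneg _) two_ne_zero).mp h2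
  calc ‖b ⟨0, hn⟩‖ = (2:ℝ) ^ (((n : ℝ) - 1) / 2) * (c * ‖b ⟨0, hn⟩‖) := by
        rw [← mul_assoc, hprod, one_mul]
    _ ≤ 2 ^ (((n : ℝ) - 1) / 2) * lambda1 L := by
        apply mul_le_mul_of_nonneg_left hlow
        positivity
end
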